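/- For natural numbers A ≥ 1, N ≥ 1 and M, the number M(A, N, M, N) of strings of length N over {0, …, A−1} with entry sum M whose cyclic-shift orbit has size exactly N (proper cycles) satisfies M(A, N, M, N) = ∑_{n ∈ D(A,N,M)} μ(N/n) · |S(A, n, M·n/N)|, where the sum runs over all n with n | N and N | M·n, and μ is the Möbius function. -/

import Mathlib

/-- The cyclic shift operator: `(shift a) i = a (i - 1 mod N)`. -/
def shift {A N : ℕ} (a : Fin N → Fin A) : Fin N → Fin A :=
  fun i => a ⟨((i : ℕ) + (N - 1)) % N, Nat.mod_lt _ i.pos⟩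

/-- The orbit of a string under iterated cyclic shifts. -/
def orbit {A N : ℕ} (a : Fin N → Fin A) : Set (Fin N → Fin A) :=
  {b | ∃ k : ℕ, shift^[k] a = b}

/-- The order of the cycle generated by `a`: the size of its shift orbit. -/
noncomputable def orbitSize {A N : ℕ} (a : Fin N → Fin A) : ℕ :=
  (orbit a).ncard

/-- The sum of the entries of a string. -/
def strSum {A N : ℕ} (a : Fin N → Fin A) : ℕ := ∑ i, (a i : ℕ)

/-- `|S(A,N,M)|`: the number of strings of length `N` over `{0,…,A-1}` with sum `M`. -/
noncomputable def Scard (A N M : ℕ) : ℕ :=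
  Set.ncard {a : Fin N → Fin A | strSum a = M}

/-- `M(A,N,M,n)`: the number of strings of length `N` over `{0,…,A-1}` with sum `M`
whose orbit has size exactly `n`. -/
noncomputable def Mcount (A N M n : ℕ) : ℕ :=
  Set.ncard {a : Fin N → Fin A | strSum a = M ∧ orbitSize a = n}

/-- `N(A,N,M,n)`: the number of cycles (shift orbits) of size exactly `n` among strings
of length `N` over `{0,…,A-1}` with sum `M`. -/
noncomputable def Ncount (A N M n : ℕ) : ℕ :=
  Set.ncard {o : Set (Fin N → Fin A) | ∃ a, strSum a = M ∧ orbitSize a = n ∧ o = orbit a}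

open Function Finset Fin.NatCast Fin.CommRing

namespace Stmt11Aux

variable {A N : ℕ}

lemma natCast_sub_one [NeZero N] : ((N - 1 : ℕ) : Fin N) = -1 := by
  have hN : 0 < N := Nat.pos_of_ne_zero (NeZero.ne N)
  have h : ((N - 1 : ℕ) : Fin N) + 1 = 0 := by
    rw [← Nat.cast_one (R := Fin N), ← Nat.cast_add, Nat.sub_add_cancel hN,
      Fin.natCast_self]
  exact eq_neg_of_add_eq_zero_left h

lemma shift_apply [NeZero N] (a : Fin N → Fin A) (i : Fin N) :
    shift a i = a (i - 1) := by
  have hN : 0 < N := Nat.pos_of_ne_zero (NeZero.ne N)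
  have : (⟨((i : ℕ) + (N - 1)) % N, Nat.mod_lt _ i.pos⟩ : Fin N) = i + ((N - 1 : ℕ) : Fin N) := by
    apply Fin.ext
    simp [Fin.add_def, Fin.val_natCast, Nat.mod_eq_of_lt (Nat.sub_lt hN one_pos)]
  rw [shift, this, natCast_sub_one, ← sub_eq_add_neg]

lemma shift_iterate [NeZero N] (a : Fin N → Fin A) (k : ℕ) (i : Fin N) :
    shift^[k] a i = a (i - (k : Fin N)) := by
  induction k generalizing a with
  | zero => simp
  | succ k ih =>
    rw [Function.iterate_succ_apply, ih, shift_apply]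
    congr 1
    push_cast
    ring

lemma isPeriodicPt_iff' [NeZero N] (a : Fin N → Fin A) (n : ℕ) :
    IsPeriodicPt shift n a ↔ ∀ i : Fin N, a (i + (n : Fin N)) = a i := by
  constructor
  · intro h i
    have := congrFun (h : shift^[n] a = a) (i + (n : Fin N))
    rw [shift_iterate] at this
    simpa using this.symm
  · intro h
    funext i
    rw [shift_iterate]
    have := h (i - (n : Fin N))
    simpa using this.symm

lemma isPeriodicPt_N [NeZero N] (a : Fin N → Fin A) : IsPeriodicPt shift N a := by
  rw [isPeriodicPt_iff']
  simp

lemma shift_injective [NeZero N] : Function.Injective (shift (A := A) (N := N)) := by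
  intro a b h
  funext i
  have := congrFun h (i + 1)
  rw [shift_apply, shift_apply] at this
  simpa using this

lemma orbitSize_eq [NeZero N] (a : Fin N → Fin A) :
    orbitSize a = minimalPeriod shift a := by
  have hN : 0 < N := Nat.pos_of_ne_zero (NeZero.ne N)
  have hpos : 0 < minimalPeriod shift a := (isPeriodicPt_N a).minimalPeriod_pos hN
  set r := minimalPeriod shift a with hr
  have horb : orbit a = (fun k => shift^[k] a) '' (Set.Iio r) := by
    ext b
    constructor
    · rintro ⟨k, rfl⟩
      exact ⟨k % r, Nat.mod_lt _ hpos, iterate_mod_minimalPeriod_eq⟩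
    · rintro ⟨k, _, rfl⟩
      exact ⟨k, rfl⟩
  have key : ∀ i j : ℕ, i ≤ j → j < r → shift^[i] a = shift^[j] a → i = j := by
    intro i j hij hj h
    have h1 : shift^[i] (shift^[j - i] a) = shift^[i] a := by
      rw [← Function.iterate_add_apply, Nat.add_sub_cancel' hij, ← h]
    have h2 : shift^[j - i] a = a := shift_injective.iterate i h1
    have h3 : r ∣ (j - i) := IsPeriodicPt.minimalPeriod_dvd h2
    rcases Nat.eq_zero_or_pos (j - i) with h4 | h4
    · omega
    · have := Nat.le_of_dvd h4 h3; omega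
  have hinj : Set.InjOn (fun k => shift^[k] a) (Set.Iio r) := by
    intro i hi j hj hij
    rcases le_total i j with h | h
    · exact key i j h hj hij
    · exact (key j i h hi hij.symm).symm
  rw [orbitSize, horb, Set.ncard_image_of_injOn hinj, ← Finset.coe_Iio,
    Set.ncard_coe_finset, Nat.card_Iio]

lemma natCast_mod_N {n : ℕ} [NeZero n] (hd : n ∣ N) (x : ℕ) :
    ((x % N : ℕ) : Fin n) = (x : Fin n) := by
  apply Fin.ext
  simp only [Fin.val_natCast]
  rw [Nat.mod_mod_of_dvd _ hd]

/-- Extension of a string of length `n` to a periodic string of length `N`. -/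
def extN (n : ℕ) [NeZero n] (b : Fin n → Fin A) : Fin N → Fin A :=
  fun i => b ((i : ℕ) : Fin n)

lemma extN_injective {n : ℕ} [NeZero n] (hn : n ≤ N) :
    Function.Injective (extN (A := A) (N := N) n) := by
  intro b b' h
  funext j
  have hj : (j : ℕ) < N := lt_of_lt_of_le j.isLt hn
  have := congrFun h ⟨(j : ℕ), hj⟩
  simpa [extN, Fin.cast_val_eq_self] using this

lemma extN_periodic {n : ℕ} [NeZero n] [NeZero N] (hd : n ∣ N) (b : Fin n → Fin A)
    (i : Fin N) : extN n b (i + (n : Fin N)) = extN n b i := by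
  have h1 : (((i + (n : Fin N) : Fin N) : ℕ) : Fin n) = ((i : ℕ) : Fin n) := by
    rw [Fin.add_def]
    simp only [Fin.val_natCast]
    rw [natCast_mod_N hd, Nat.cast_add, natCast_mod_N hd, Fin.natCast_self, add_zero]
  simp only [extN, h1]

lemma periodic_mod {n : ℕ} [NeZero n] [NeZero N] (a : Fin N → Fin A)
    (h : ∀ i : Fin N, a (i + (n : Fin N)) = a i) (m : ℕ) :
    a (m : Fin N) = a ((m % n : ℕ) : Fin N) := by
  have hn : 0 < n := Nat.pos_of_ne_zero (NeZero.ne n)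
  induction m using Nat.strong_induction_on with
  | _ m ih =>
    rcases lt_or_ge m n with hm | hm
    · rw [Nat.mod_eq_of_lt hm]
    · have h1 : (m : Fin N) = ((m - n : ℕ) : Fin N) + (n : Fin N) := by
        rw [← Nat.cast_add, Nat.sub_add_cancel hm]
      rw [h1, h, ih (m - n) (by omega)]
      congr 1
      have : (m - n) % n = m % n := by
        conv_rhs => rw [← Nat.sub_add_cancel hm, Nat.add_mod_right]
      rw [this]

lemma sum_block (n : ℕ) (f : ℕ → ℕ) (hf : ∀ m, f (m + n) = f m) (q : ℕ) :
    ∑ m ∈ range (q * n), f m = q * ∑ m ∈ range n, f m := by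
  have hshift : ∀ q m, f (q * n + m) = f m := by
    intro q
    induction q with
    | zero => simp
    | succ q ih =>
      intro m
      have : (q + 1) * n + m = (q * n + m) + n := by ring
      rw [this, hf, ih]
  induction q with
  | zero => simp
  | succ q ih =>
    have : (q + 1) * n = q * n + n := by ring
    rw [this, Finset.sum_range_add, ih]
    have : ∑ m ∈ range n, f (q * n + m) = ∑ m ∈ range n, f m :=
      Finset.sum_congr rfl fun m _ => hshift q m
    rw [this]
    ring

lemma strSum_extN {n : ℕ} [NeZero n] [NeZero N] (hd : n ∣ N) (b : Fin n → Fin A) :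
    strSum (extN (N := N) n b) = (N / n) * strSum b := by
  have hn : 0 < n := Nat.pos_of_ne_zero (NeZero.ne n)
  set f : ℕ → ℕ := fun m => ((b ((m : ℕ) : Fin n)) : ℕ) with hfdef
  have h1 : strSum (extN (N := N) n b) = ∑ m ∈ range N, f m := by
    rw [strSum, ← Fin.sum_univ_eq_sum_range]
    apply Finset.sum_congr rfl
    intro i _
    simp [extN, hfdef]
  have hf : ∀ m, f (m + n) = f m := by
    intro m
    simp only [hfdef, Nat.cast_add, Fin.natCast_self, add_zero]
  have h2 : ∑ m ∈ range n, f m = strSum b := by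
    rw [strSum, ← Fin.sum_univ_eq_sum_range]
    apply Finset.sum_congr rfl
    intro j _
    simp [hfdef, Fin.cast_val_eq_self]
  have h3 : N = (N / n) * n := (Nat.div_mul_cancel hd).symm
  rw [h1]
  conv_lhs => rw [h3]
  rw [sum_block n f hf (N / n), h2]

lemma periodic_set_card {M n : ℕ} [NeZero n] [NeZero N] (hd : n ∣ N) :
    Set.ncard {a : Fin N → Fin A | strSum a = M ∧ IsPeriodicPt shift n a}
      = Set.ncard {b : Fin n → Fin A | (N / n) * strSum b = M} := by
  have hn : 0 < n := Nat.pos_of_ne_zero (NeZero.ne n)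
  have hnN : n ≤ N := Nat.le_of_dvd (Nat.pos_of_ne_zero (NeZero.ne N)) hd
  have himg : {a : Fin N → Fin A | strSum a = M ∧ IsPeriodicPt shift n a}
      = extN n '' {b : Fin n → Fin A | (N / n) * strSum b = M} := by
    ext a
    constructor
    · rintro ⟨hsum, hper⟩
      rw [isPeriodicPt_iff'] at hper
      set b : Fin n → Fin A := fun j => a (((j : ℕ) : ℕ) : Fin N) with hbdef
      have hab : extN n b = a := by
        funext i
        have : extN n b i = a ((((i : ℕ) % n : ℕ)) : Fin N) := by
          simp [extN, hbdef, Fin.val_natCast]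
        rw [this, ← periodic_mod a hper (i : ℕ), Fin.cast_val_eq_self]
      refine ⟨b, ?_, hab⟩
      show (N / n) * strSum b = M
      rw [← hsum, ← hab, strSum_extN hd]
    · rintro ⟨b, hb, rfl⟩
      refine ⟨?_, ?_⟩
      · rw [strSum_extN hd]; exact hb
      · rw [isPeriodicPt_iff']
        exact extN_periodic hd b
  rw [himg, Set.ncard_image_of_injective _ (extN_injective hnN)]

lemma ncard_setOf {α : Type*} [Fintype α] (p : α → Prop) [DecidablePred p] :
    Set.ncard {a | p a} = (Finset.univ.filter p).card := by
  rw [← Set.ncard_coe_finset]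
  congr 1
  ext a
  simp

end Stmt11Aux

open Stmt11Aux

/-- `M(A,N,M,N) = ∑_{n ∈ D(A,N,M)} μ(N/n)·|S(A,n,M·n/N)|`: the number of strings of length
`N ≥ 1` over `{0,…,A-1}` (`A ≥ 1`) with sum `M` and orbit of size exactly `N` (proper cycles)
is given by Möbius inversion over `D(A,N,M) = {n : n ∣ N and N ∣ M·n}`. -/
theorem stmt_11 (A N M : ℕ) (hA : 1 ≤ A) (hN : 1 ≤ N) :
    (Mcount A N M N : ℤ) =
      ∑ n ∈ N.divisors.filter (fun n => N ∣ M * n),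
        ArithmeticFunction.moebius (N / n) * (Scard A n (M * n / N) : ℤ) := by
  classical
  haveI : NeZero N := ⟨Nat.one_le_iff_ne_zero.mp hN⟩
  have hNpos : 0 < N := hN
  set g : ℕ → ℤ := fun n =>
    (Set.ncard {a : Fin N → Fin A | strSum a = M ∧ IsPeriodicPt shift n a} : ℤ) with hgdef
  set f : ℕ → ℤ := fun d => (Mcount A N M d : ℤ) with hfdef
  -- step 1: divisor-sum identity
  have hfg : ∀ n > 0, ∑ i ∈ n.divisors, f i = g n := by
    intro n hn
    have hcard : ∀ d, Mcount A N M d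
        = (Finset.univ.filter
            (fun a : Fin N → Fin A => strSum a = M ∧ minimalPeriod shift a = d)).card := by
      intro d
      rw [Mcount, ncard_setOf]
      congr 1
      apply Finset.filter_congr
      intro a _
      rw [orbitSize_eq]
    have hG : g n = ((Finset.univ.filter
        (fun a : Fin N → Fin A => strSum a = M ∧ IsPeriodicPt shift n a)).card : ℤ) := by
      show (Set.ncard {a : Fin N → Fin A | strSum a = M ∧ IsPeriodicPt shift n a} : ℤ) = _
      exact_mod_cast congrArg (Nat.cast (R := ℤ))
        (ncard_setOf (fun a : Fin N → Fin A => strSum a = M ∧ IsPeriodicPt shift n a))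
    rw [hG]
    have hfib : (Finset.univ.filter
        (fun a : Fin N → Fin A => strSum a = M ∧ IsPeriodicPt shift n a)).card
        = ∑ d ∈ n.divisors, (Finset.univ.filter
            (fun a : Fin N → Fin A => strSum a = M ∧ minimalPeriod shift a = d)).card := by
      rw [Finset.card_eq_sum_card_fiberwise
        (f := fun a : Fin N → Fin A => minimalPeriod shift a) (t := n.divisors) ?_]
      · apply Finset.sum_congr rfl
        intro d hd
        congr 1
        rw [Finset.filter_filter]
        apply Finset.filter_congr
        intro a _
        simp only [Nat.mem_divisors] at hd
        constructor
        · rintro ⟨⟨h1, _⟩, h3⟩; exact ⟨h1, h3⟩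
        · rintro ⟨h1, h2⟩
          refine ⟨⟨h1, ?_⟩, h2⟩
          rw [isPeriodicPt_iff_minimalPeriod_dvd, h2]
          exact hd.1
      · intro a ha
        simp only [Finset.mem_coe, Finset.mem_filter] at ha ⊢
        rw [Nat.mem_divisors]
        exact ⟨(isPeriodicPt_iff_minimalPeriod_dvd).mp ha.2.2, hn.ne'⟩
    rw [hfib]
    push_cast
    apply Finset.sum_congr rfl
    intro d _
    show (Mcount A N M d : ℤ) = _
    rw [hcard d]
  -- step 2: Möbius inversion
  have hmain := (ArithmeticFunction.sum_eq_iff_sum_smul_moebius_eq.mp hfg) N hNpos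
  rw [Nat.sum_divisorsAntidiagonal'
    (f := fun x y => (ArithmeticFunction.moebius x : ℤ) • g y)] at hmain
  -- hmain : ∑ d in N.divisors, μ (N/d) • g d = f N
  have hMc : (Mcount A N M N : ℤ) = ∑ d ∈ N.divisors,
      (ArithmeticFunction.moebius (N / d) : ℤ) • g d := by
    rw [hmain]
  rw [hMc]
  -- step 3: evaluate g on divisors
  rw [← Finset.sum_filter_add_sum_filter_not N.divisors (fun n => N ∣ M * n)]
  have hzero : ∑ d ∈ N.divisors.filter (fun n => ¬ N ∣ M * n),
      (ArithmeticFunction.moebius (N / d) : ℤ) • g d = 0 := by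
    apply Finset.sum_eq_zero
    intro d hd
    simp only [Finset.mem_filter, Nat.mem_divisors] at hd
    obtain ⟨⟨hdvd, _⟩, hnd⟩ := hd
    have hdpos : 0 < d := Nat.pos_of_dvd_of_pos hdvd hNpos
    haveI : NeZero d := ⟨hdpos.ne'⟩
    have hempty : {b : Fin d → Fin A | (N / d) * strSum b = M} = (∅ : Set (Fin d → Fin A)) := by
      ext b
      simp only [Set.mem_setOf_eq, Set.mem_empty_iff_false, iff_false]
      intro hb
      apply hnd
      refine ⟨strSum b, ?_⟩
      rw [← hb]
      rw [mul_comm (N / d) (strSum b), mul_assoc]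
      rw [Nat.div_mul_cancel hdvd, mul_comm]
    have : g d = 0 := by
      rw [hgdef]
      simp only
      rw [periodic_set_card hdvd, hempty, Set.ncard_empty, Nat.cast_zero]
    rw [this, smul_zero]
  rw [hzero, add_zero]
  apply Finset.sum_congr rfl
  intro d hd
  simp only [Finset.mem_filter, Nat.mem_divisors] at hd
  obtain ⟨⟨hdvd, _⟩, hMd⟩ := hd
  have hdpos : 0 < d := Nat.pos_of_dvd_of_pos hdvd hNpos
  haveI : NeZero d := ⟨hdpos.ne'⟩
  have hset : {b : Fin d → Fin A | (N / d) * strSum b = M}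
      = {b : Fin d → Fin A | strSum b = M * d / N} := by
    obtain ⟨t, ht⟩ := hMd
    ext b
    simp only [Set.mem_setOf_eq]
    have hMdN : M * d / N = t := by rw [ht, Nat.mul_div_cancel_left _ hNpos]
    rw [hMdN]
    constructor
    · intro hb
      have : M * d = N * strSum b := by
        rw [← hb, mul_comm (N / d) (strSum b), mul_assoc, Nat.div_mul_cancel hdvd, mul_comm]
      have : N * strSum b = N * t := by rw [← this, ht]
      exact Nat.eq_of_mul_eq_mul_left hNpos this
    · intro hb
      subst hb
      have key : (N / d) * strSum b * d = M * d := by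
        rw [mul_assoc, mul_comm (strSum b) d, ← mul_assoc, Nat.div_mul_cancel hdvd, ht]
      exact Nat.eq_of_mul_eq_mul_right hdpos key
  have : g d = (Scard A d (M * d / N) : ℤ) := by
    rw [hgdef]
    simp only
    rw [periodic_set_card hdvd, hset, Scard]
  simp only [this, zsmul_eq_mul, Int.cast_id]
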